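/- Let a = (a_1,…,a_m) and b = (b_1,…,b_t) be compositions of n with b_1 < a_1 < 2b_1 (Rotation Contraction). Set a' = (b_1, a_2,…,a_m) and b' = (2b_1 − a_1, b_2,…,b_t), which are compositions of n − (a_1 − b_1). Then M(a|b) and M(a'|b') have the same number of cycle components and the same number of path components; in particular ind(a,b) = ind(a',b'). -/

import Mathlib

open scoped Classical

/-- Vertices `j` and `k` of `{1,…,n}` (encoded as `Fin n`, vertex `v` is `v+1`) are joined by
an edge determined by the composition `a`. -/
def CompEdge {n : ℕ} (a : Composition n) (j k : Fin n) : Prop :=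
  j ≠ k ∧ ∃ i : Fin a.length,
    a.sizeUpTo i < (j : ℕ) + 1 ∧ (j : ℕ) + 1 ≤ a.sizeUpTo (i + 1) ∧
    a.sizeUpTo i < (k : ℕ) + 1 ∧ (k : ℕ) + 1 ≤ a.sizeUpTo (i + 1) ∧
    ((j : ℕ) + 1) + ((k : ℕ) + 1) = 2 * a.sizeUpTo i + a.blocksFun i + 1

lemma CompEdge.symm {n : ℕ} {a : Composition n} {j k : Fin n} (h : CompEdge a j k) :
    CompEdge a k j := by
  obtain ⟨hne, i, h1, h2, h3, h4, h5⟩ := h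
  exact ⟨hne.symm, i, h3, h4, h1, h2, by omega⟩

/-- The meander `M(a|b)` of the pair of compositions `(a, b)` of `n`. -/
def Meander {n : ℕ} (a b : Composition n) : SimpleGraph (Fin n) where
  Adj j k := CompEdge a j k ∨ CompEdge b j k
  symm := by
    constructor
    intro j k h
    rcases h with h | h
    · exact Or.inl h.symm
    · exact Or.inr h.symm
  loopless := by
    constructor
    intro j h
    rcases h with ⟨hne, _⟩ | ⟨hne, _⟩ <;> exact hne rfl

/-- A connected component of the meander is a cycle if each of its vertices is incident
to both a top edge and a bottom edge. -/
def IsCycleComp {n : ℕ} (a b : Composition n) (c : (Meander a b).ConnectedComponent) : Prop :=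
  ∀ v : Fin n, (Meander a b).connectedComponentMk v = c →
    (∃ w, CompEdge a v w) ∧ (∃ w, CompEdge b v w)

/-- The number of cycle components of the meander `M(a|b)`. -/
noncomputable def cycleCount {n : ℕ} (a b : Composition n) : ℕ :=
  Nat.card {c : (Meander a b).ConnectedComponent // IsCycleComp a b c}

/-- The number of path components of the meander `M(a|b)`. -/
noncomputable def pathCount {n : ℕ} (a b : Composition n) : ℕ :=
  Nat.card {c : (Meander a b).ConnectedComponent // ¬ IsCycleComp a b c}

/-- The index `ind(a,b) = 2C + P - 1` of a pair of compositions of `n`. -/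
noncomputable def seaweedInd {n : ℕ} (a b : Composition n) : ℕ :=
  2 * cycleCount a b + pathCount a b - 1

/-- `C(n,k)`: the number of ordered pairs of compositions of `n` of index `k`. -/
noncomputable def Cnk (n k : ℕ) : ℕ :=
  Nat.card {p : Composition n × Composition n // seaweedInd p.1 p.2 = k}

namespace RC

lemma length_cons {n : ℕ} (x : Composition n) {x₁ : ℕ} {t : List ℕ}
    (hx : x.blocks = x₁ :: t) : x.length = t.length + 1 := by
  simp [Composition.length, hx]

lemma sizeUpTo_succ_cons {n : ℕ} (x : Composition n) {x₁ : ℕ} {t : List ℕ}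
    (hx : x.blocks = x₁ :: t) (k : ℕ) :
    x.sizeUpTo (k + 1) = x₁ + (t.take k).sum := by
  rw [Composition.sizeUpTo, hx, List.take_succ_cons, List.sum_cons]

/-- Build an edge in the first block from the position-sum condition. -/
lemma mem_edge {n : ℕ} (x : Composition n) {x₁ : ℕ} {t : List ℕ}
    (hx : x.blocks = x₁ :: t) (j k : Fin n) (hne : (j : ℕ) ≠ (k : ℕ))
    (hs : ((j : ℕ) + 1) + ((k : ℕ) + 1) = x₁ + 1) : CompEdge x j k := by
  have hlen : 0 < x.length := by rw [length_cons x hx]; omega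
  have hS1 : x.sizeUpTo 1 = x₁ := by
    have := sizeUpTo_succ_cons x hx 0; simpa using this
  have hS0 : x.sizeUpTo 0 = 0 := x.sizeUpTo_zero
  have hbf : x.blocksFun ⟨0, hlen⟩ = x₁ := by simp [Composition.blocksFun, hx]
  refine ⟨fun h => hne (congrArg Fin.val h), ⟨0, hlen⟩, ?_, ?_, ?_, ?_, ?_⟩ <;>
    simp only [Fin.val_mk, hS0, hS1, hbf] <;> omega

/-- Midpoint of a block has no partner. -/
lemma no_partner_of_mid {n : ℕ} (x : Composition n) (v : Fin n) (i : Fin x.length)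
    (h1 : x.sizeUpTo i < (v : ℕ) + 1) (h2 : (v : ℕ) + 1 ≤ x.sizeUpTo ((i : ℕ) + 1))
    (hmid : 2 * ((v : ℕ) + 1) = x.sizeUpTo i + x.sizeUpTo ((i : ℕ) + 1) + 1) :
    ¬ ∃ w, CompEdge x v w := by
  rintro ⟨w, hne, j, g1, g2, g3, g4, g5⟩
  have hij : (i : ℕ) = (j : ℕ) := by
    rcases lt_trichotomy (i : ℕ) (j : ℕ) with h | h | h
    · have : x.sizeUpTo ((i : ℕ) + 1) ≤ x.sizeUpTo j := x.monotone_sizeUpTo (by omega)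
      omega
    · exact h
    · have : x.sizeUpTo ((j : ℕ) + 1) ≤ x.sizeUpTo i := x.monotone_sizeUpTo (by omega)
      omega
  have hsucc := x.sizeUpTo_succ' j
  rw [hij] at h1 h2 hmid
  have : (w : ℕ) = (v : ℕ) := by omega
  exact hne (Fin.ext this.symm)

/-- Non-midpoint of a block has a partner. -/
lemma partner_of_not_mid {n : ℕ} (x : Composition n) (v : Fin n) (i : Fin x.length)
    (h1 : x.sizeUpTo i < (v : ℕ) + 1) (h2 : (v : ℕ) + 1 ≤ x.sizeUpTo ((i : ℕ) + 1))
    (hmid : 2 * ((v : ℕ) + 1) ≠ x.sizeUpTo i + x.sizeUpTo ((i : ℕ) + 1) + 1) :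
    ∃ w, CompEdge x v w := by
  have hsucc := x.sizeUpTo_succ' i
  have hle : x.sizeUpTo ((i : ℕ) + 1) ≤ n := x.sizeUpTo_le _
  set q : ℕ := x.sizeUpTo i + x.sizeUpTo ((i : ℕ) + 1) + 1 - ((v : ℕ) + 1) with hq
  have hq1 : x.sizeUpTo i < q := by omega
  have hq2 : q ≤ x.sizeUpTo ((i : ℕ) + 1) := by omega
  refine ⟨⟨q - 1, by omega⟩, fun h => ?_, i, h1, h2, ?_, ?_, ?_⟩
  · have := congrArg Fin.val h
    simp only [Fin.val_mk] at this
    omega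
  · simp only [Fin.val_mk]; omega
  · simp only [Fin.val_mk]; omega
  · simp only [Fin.val_mk]; omega

lemma exists_block {n : ℕ} (x : Composition n) (v : Fin n) :
    ∃ i : Fin x.length, x.sizeUpTo i < (v : ℕ) + 1 ∧ (v : ℕ) + 1 ≤ x.sizeUpTo ((i : ℕ) + 1) := by
  refine ⟨x.index v, ?_, ?_⟩
  · have := x.sizeUpTo_index_le v; omega
  · have := x.lt_sizeUpTo_index_succ v
    have h2 : ((x.index v).succ : ℕ) = (x.index v : ℕ) + 1 := rfl
    rw [h2] at this
    omega

lemma mid_of_no_partner {n : ℕ} (x : Composition n) (v : Fin n) (i : Fin x.length)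
    (h1 : x.sizeUpTo i < (v : ℕ) + 1) (h2 : (v : ℕ) + 1 ≤ x.sizeUpTo ((i : ℕ) + 1))
    (h : ¬ ∃ w, CompEdge x v w) :
    2 * ((v : ℕ) + 1) = x.sizeUpTo i + x.sizeUpTo ((i : ℕ) + 1) + 1 := by
  by_contra hc
  exact h (partner_of_not_mid x v i h1 h2 hc)

section transfer
variable {n n' d y : ℕ} {t : List ℕ} (x : Composition n) (x' : Composition n')
  (hx : x.blocks = (y + d) :: t) (hx' : x'.blocks = y :: t)

include hx hx' in
lemma up (hn : n = n' + d) (u v : Fin n') (h : CompEdge x' u v) :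
    ((u : ℕ) + 1 ≤ y ∧ (v : ℕ) + 1 ≤ y ∧ ((u : ℕ) + 1) + ((v : ℕ) + 1) = y + 1
        ∧ (u : ℕ) ≠ (v : ℕ)) ∨
      (∃ U V : Fin n, (U : ℕ) = (u : ℕ) + d ∧ (V : ℕ) = (v : ℕ) + d ∧ CompEdge x U V) := by
  obtain ⟨hne, ⟨iv, hiv⟩, h1, h2, h3, h4, h5⟩ := h
  have hne' : (u : ℕ) ≠ (v : ℕ) := fun h => hne (Fin.ext h)
  have hsucc := x'.sizeUpTo_succ' ⟨iv, hiv⟩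
  simp only [Fin.val_mk] at h1 h2 h3 h4 h5 hsucc
  match iv, hiv with
  | 0, hiv =>
    left
    have hS1 : x'.sizeUpTo 1 = y := by simpa using sizeUpTo_succ_cons x' hx' 0
    have hS0 : x'.sizeUpTo 0 = 0 := x'.sizeUpTo_zero
    simp only [Nat.zero_add] at h2 h4 hsucc
    exact ⟨by omega, by omega, by omega, hne'⟩
  | m + 1, hiv =>
    right
    have hlen : x.length = t.length + 1 := length_cons x hx
    have hlen' : x'.length = t.length + 1 := length_cons x' hx'
    have hiv2 : m + 1 < x.length := by omega
    have e1 := sizeUpTo_succ_cons x hx m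
    have e2 := sizeUpTo_succ_cons x hx (m + 1)
    have e1' := sizeUpTo_succ_cons x' hx' m
    have e2' := sizeUpTo_succ_cons x' hx' (m + 1)
    have hsucc2 := x.sizeUpTo_succ' ⟨m + 1, hiv2⟩
    simp only [Fin.val_mk] at hsucc2
    have hun : (u : ℕ) < n' := u.isLt
    have hvn : (v : ℕ) < n' := v.isLt
    refine ⟨⟨(u : ℕ) + d, by omega⟩, ⟨(v : ℕ) + d, by omega⟩, rfl, rfl,
      fun h => hne' (by have := congrArg Fin.val h; simp only [Fin.val_mk] at this; omega),
      ⟨m + 1, hiv2⟩, ?_, ?_, ?_, ?_, ?_⟩ <;>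
      simp only [Fin.val_mk] <;> omega

include hx hx' in
lemma down (hn : n = n' + d) (u v : Fin n) (h : CompEdge x u v) :
    ((u : ℕ) + 1 ≤ y + d ∧ (v : ℕ) + 1 ≤ y + d ∧ ((u : ℕ) + 1) + ((v : ℕ) + 1) = y + d + 1
        ∧ (u : ℕ) ≠ (v : ℕ)) ∨
      (∃ U V : Fin n', (U : ℕ) + d = (u : ℕ) ∧ (V : ℕ) + d = (v : ℕ) ∧ y + d ≤ (u : ℕ) ∧
        y + d ≤ (v : ℕ) ∧ CompEdge x' U V) := by
  obtain ⟨hne, ⟨iv, hiv⟩, h1, h2, h3, h4, h5⟩ := h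
  have hne' : (u : ℕ) ≠ (v : ℕ) := fun h => hne (Fin.ext h)
  have hsucc := x.sizeUpTo_succ' ⟨iv, hiv⟩
  simp only [Fin.val_mk] at h1 h2 h3 h4 h5 hsucc
  match iv, hiv with
  | 0, hiv =>
    left
    have hS1 : x.sizeUpTo 1 = y + d := by simpa using sizeUpTo_succ_cons x hx 0
    have hS0 : x.sizeUpTo 0 = 0 := x.sizeUpTo_zero
    simp only [Nat.zero_add] at h2 h4 hsucc
    exact ⟨by omega, by omega, by omega, hne'⟩
  | m + 1, hiv =>
    right
    have hlen : x.length = t.length + 1 := length_cons x hx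
    have hlen' : x'.length = t.length + 1 := length_cons x' hx'
    have hiv2 : m + 1 < x'.length := by omega
    have e1 := sizeUpTo_succ_cons x hx m
    have e2 := sizeUpTo_succ_cons x hx (m + 1)
    have e1' := sizeUpTo_succ_cons x' hx' m
    have e2' := sizeUpTo_succ_cons x' hx' (m + 1)
    have hsucc2 := x'.sizeUpTo_succ' ⟨m + 1, hiv2⟩
    simp only [Fin.val_mk] at hsucc2
    have hun : (u : ℕ) < n := u.isLt
    have hvn : (v : ℕ) < n := v.isLt
    refine ⟨⟨(u : ℕ) - d, by omega⟩, ⟨(v : ℕ) - d, by omega⟩, by simp only [Fin.val_mk]; omega,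
      by simp only [Fin.val_mk]; omega, by omega, by omega,
      fun h => hne' (by have := congrArg Fin.val h; simp only [Fin.val_mk] at this; omega),
      ⟨m + 1, hiv2⟩, ?_, ?_, ?_, ?_, ?_⟩ <;>
      simp only [Fin.val_mk] <;> omega

include hx hx' in
/-- No-partner transfers from `x` down to `x'` for vertices beyond the first block. -/
lemma no_partner_down (v : Fin n) (v' : Fin n') (hvv : (v : ℕ) = (v' : ℕ) + d)
    (hy : y ≤ (v' : ℕ)) (h : ¬ ∃ w, CompEdge x v w) : ¬ ∃ w, CompEdge x' v' w := by
  have hlen : x.length = t.length + 1 := length_cons x hx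
  have hlen' : x'.length = t.length + 1 := length_cons x' hx'
  obtain ⟨⟨iv, hiv⟩, h1, h2⟩ := exists_block x' v'
  simp only [Fin.val_mk] at h1 h2
  match iv, hiv with
  | 0, hiv =>
    exfalso
    have hS1 : x'.sizeUpTo 1 = y := by simpa using sizeUpTo_succ_cons x' hx' 0
    simp only [Nat.zero_add] at h2
    omega
  | m + 1, hiv =>
    have e1 := sizeUpTo_succ_cons x hx m
    have e2 := sizeUpTo_succ_cons x hx (m + 1)
    have e1' := sizeUpTo_succ_cons x' hx' m
    have e2' := sizeUpTo_succ_cons x' hx' (m + 1)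
    have hiv2 : m + 1 < x.length := by omega
    have hmid := mid_of_no_partner x v ⟨m + 1, hiv2⟩
      (by simp only [Fin.val_mk]; omega) (by simp only [Fin.val_mk]; omega) h
    simp only [Fin.val_mk] at hmid
    refine no_partner_of_mid x' v' ⟨m + 1, hiv⟩ ?_ ?_ ?_ <;> simp only [Fin.val_mk] <;> omega

include hx hx' in
/-- No-partner transfers from `x'` up to `x` for vertices beyond the first block. -/
lemma no_partner_up (v : Fin n) (v' : Fin n') (hvv : (v : ℕ) = (v' : ℕ) + d)
    (hy : y ≤ (v' : ℕ)) (h : ¬ ∃ w, CompEdge x' v' w) : ¬ ∃ w, CompEdge x v w := by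
  have hlen : x.length = t.length + 1 := length_cons x hx
  have hlen' : x'.length = t.length + 1 := length_cons x' hx'
  obtain ⟨⟨iv, hiv⟩, h1, h2⟩ := exists_block x v
  simp only [Fin.val_mk] at h1 h2
  match iv, hiv with
  | 0, hiv =>
    exfalso
    have hS1 : x.sizeUpTo 1 = y + d := by simpa using sizeUpTo_succ_cons x hx 0
    simp only [Nat.zero_add] at h2
    omega
  | m + 1, hiv =>
    have e1 := sizeUpTo_succ_cons x hx m
    have e2 := sizeUpTo_succ_cons x hx (m + 1)
    have e1' := sizeUpTo_succ_cons x' hx' m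
    have e2' := sizeUpTo_succ_cons x' hx' (m + 1)
    have hiv2 : m + 1 < x'.length := by omega
    have hmid := mid_of_no_partner x' v' ⟨m + 1, hiv2⟩
      (by simp only [Fin.val_mk]; omega) (by simp only [Fin.val_mk]; omega) h
    simp only [Fin.val_mk] at hmid
    refine no_partner_of_mid x v ⟨m + 1, hiv⟩ ?_ ?_ ?_ <;> simp only [Fin.val_mk] <;> omega
end transfer

/-- A vertex in the first block with the midpoint property has no partner. -/
lemma no_partner_first {n : ℕ} (x : Composition n) {x₁ : ℕ} {t : List ℕ}
    (hx : x.blocks = x₁ :: t) (v : Fin n) (hv : (v : ℕ) + 1 ≤ x₁)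
    (hmid : 2 * ((v : ℕ) + 1) = x₁ + 1) : ¬ ∃ w, CompEdge x v w := by
  have hlen : 0 < x.length := by rw [length_cons x hx]; omega
  have hS1 : x.sizeUpTo 1 = x₁ := by simpa using sizeUpTo_succ_cons x hx 0
  have hS0 : x.sizeUpTo 0 = 0 := x.sizeUpTo_zero
  refine no_partner_of_mid x v ⟨0, hlen⟩ ?_ ?_ ?_ <;> simp only [Fin.val_mk, Nat.zero_add] <;>
    omega

/-- A vertex in the first block with no partner satisfies the midpoint property. -/
lemma first_mid {n : ℕ} (x : Composition n) {x₁ : ℕ} {t : List ℕ}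
    (hx : x.blocks = x₁ :: t) (v : Fin n) (hv : (v : ℕ) + 1 ≤ x₁)
    (h : ¬ ∃ w, CompEdge x v w) : 2 * ((v : ℕ) + 1) = x₁ + 1 := by
  have hS1 : x.sizeUpTo 1 = x₁ := by simpa using sizeUpTo_succ_cons x hx 0
  have hS0 : x.sizeUpTo 0 = 0 := x.sizeUpTo_zero
  obtain ⟨⟨iv, hiv⟩, h1, h2⟩ := exists_block x v
  simp only [Fin.val_mk] at h1 h2
  match iv, hiv with
  | 0, hiv =>
    have := mid_of_no_partner x v ⟨0, hiv⟩ (by simpa [hS0] using h1)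
      (by simpa using h2) h
    simp only [Fin.val_mk, Nat.zero_add, hS0, hS1] at this
    omega
  | m + 1, hiv =>
    exfalso
    have : x.sizeUpTo 1 ≤ x.sizeUpTo (m + 1) := x.monotone_sizeUpTo (by omega)
    omega

end RC

theorem rotation_contraction (n : ℕ) (a b : Composition n) (a₁ b₁ : ℕ) (as bs : List ℕ)
    (ha : a.blocks = a₁ :: as) (hb : b.blocks = b₁ :: bs)
    (h₁ : b₁ < a₁) (h₂ : a₁ < 2 * b₁)
    (a' b' : Composition (n - (a₁ - b₁)))
    (ha' : a'.blocks = b₁ :: as) (hb' : b'.blocks = (2 * b₁ - a₁) :: bs) :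
    cycleCount a b = cycleCount a' b' ∧ pathCount a b = pathCount a' b' ∧
      seaweedInd a b = seaweedInd a' b' := by
  classical
  obtain ⟨d, hd⟩ : ∃ d, a₁ = b₁ + d := ⟨a₁ - b₁, by omega⟩
  have hd1 : 1 ≤ d := by omega
  obtain ⟨c, hc⟩ : ∃ c, b₁ = c + d := ⟨b₁ - d, by omega⟩
  have hc1 : 1 ≤ c := by omega
  have hb'c : b'.blocks = c :: bs := by rw [hb']; congr 1; omega
  have hna : n = a₁ + as.sum := by rw [← a.blocks_sum, ha, List.sum_cons]
  have hNa : n - (a₁ - b₁) = b₁ + as.sum := by rw [← a'.blocks_sum, ha', List.sum_cons]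
  have hnn : n = (n - (a₁ - b₁)) + d := by omega
  have hb₁N : b₁ ≤ n - (a₁ - b₁) := by omega
  have hxa : a.blocks = (b₁ + d) :: as := by rw [ha, hd]
  have hxb : b.blocks = (c + d) :: bs := by rw [hb, hc]
  -- the vertex maps
  obtain ⟨f, hfval_lt, hfval_ge⟩ :
      ∃ f : Fin n → Fin (n - (a₁ - b₁)),
        (∀ u : Fin n, (u : ℕ) < d → (f u : ℕ) = b₁ - 1 - (u : ℕ)) ∧
        (∀ u : Fin n, d ≤ (u : ℕ) → (f u : ℕ) = (u : ℕ) - d) := by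
    refine ⟨fun u => if h : (u : ℕ) < d then ⟨b₁ - 1 - (u : ℕ), by omega⟩
      else ⟨(u : ℕ) - d, by have := u.isLt; omega⟩, fun u h => ?_, fun u h => ?_⟩
    · simp only [dif_pos h]
    · simp only [dif_neg (Nat.not_lt.mpr h)]
  obtain ⟨g, hgval⟩ : ∃ g : Fin (n - (a₁ - b₁)) → Fin n, ∀ u, (g u : ℕ) = (u : ℕ) + d := by
    exact ⟨fun u => ⟨(u : ℕ) + d, by have := u.isLt; omega⟩, fun u => rfl⟩
  -- adjacency builders
  have mkA : ∀ u v : Fin n, (u : ℕ) ≠ (v : ℕ) →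
      ((u : ℕ) + 1) + ((v : ℕ) + 1) = a₁ + 1 → (Meander a b).Adj u v :=
    fun u v h1 h2 => Or.inl (RC.mem_edge a ha u v h1 h2)
  have mkB : ∀ u v : Fin n, (u : ℕ) ≠ (v : ℕ) →
      ((u : ℕ) + 1) + ((v : ℕ) + 1) = b₁ + 1 → (Meander a b).Adj u v :=
    fun u v h1 h2 => Or.inr (RC.mem_edge b hb u v h1 h2)
  have mkA' : ∀ u v : Fin (n - (a₁ - b₁)), (u : ℕ) ≠ (v : ℕ) →
      ((u : ℕ) + 1) + ((v : ℕ) + 1) = b₁ + 1 → (Meander a' b').Adj u v :=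
    fun u v h1 h2 => Or.inl (RC.mem_edge a' ha' u v h1 h2)
  have mkB' : ∀ u v : Fin (n - (a₁ - b₁)), (u : ℕ) ≠ (v : ℕ) →
      ((u : ℕ) + 1) + ((v : ℕ) + 1) = c + 1 → (Meander a' b').Adj u v :=
    fun u v h1 h2 => Or.inr (RC.mem_edge b' hb'c u v h1 h2)
  have stepA : ∀ u v : Fin n, (u : ℕ) ≠ (v : ℕ) →
      ((u : ℕ) + 1) + ((v : ℕ) + 1) = a₁ + 1 → (Meander a b).Reachable u v :=
    fun u v h1 h2 => (mkA u v h1 h2).reachable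
  have stepB : ∀ u v : Fin n, (u : ℕ) ≠ (v : ℕ) →
      ((u : ℕ) + 1) + ((v : ℕ) + 1) = b₁ + 1 → (Meander a b).Reachable u v :=
    fun u v h1 h2 => (mkB u v h1 h2).reachable
  have stepA' : ∀ u v : Fin (n - (a₁ - b₁)), (u : ℕ) ≠ (v : ℕ) →
      ((u : ℕ) + 1) + ((v : ℕ) + 1) = b₁ + 1 → (Meander a' b').Reachable u v :=
    fun u v h1 h2 => (mkA' u v h1 h2).reachable
  have stepB' : ∀ u v : Fin (n - (a₁ - b₁)), (u : ℕ) ≠ (v : ℕ) →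
      ((u : ℕ) + 1) + ((v : ℕ) + 1) = c + 1 → (Meander a' b').Reachable u v :=
    fun u v h1 h2 => (mkB' u v h1 h2).reachable
  -- edges of M' map to walks in M under g
  have LG : ∀ u v : Fin (n - (a₁ - b₁)), (Meander a' b').Adj u v →
      (Meander a b).Reachable (g u) (g v) := by
    intro u v h
    have hguv := hgval u
    have hgvv := hgval v
    have hun : (u : ℕ) < n - (a₁ - b₁) := u.isLt
    have hvn : (v : ℕ) < n - (a₁ - b₁) := v.isLt
    rcases h with hA | hB
    · rcases RC.up a a' hxa ha' hnn u v hA with ⟨hu, hv, hsum, hne⟩ | ⟨U, V, hU, hV, hE⟩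
      · by_cases h1 : (u : ℕ) + d = (v : ℕ)
        · exact (stepB (g u) ⟨(u : ℕ), by omega⟩
              (by simp only [Fin.val_mk]; omega) (by simp only [Fin.val_mk]; omega)).trans
            (stepA ⟨(u : ℕ), by omega⟩ (g v)
              (by simp only [Fin.val_mk]; omega) (by simp only [Fin.val_mk]; omega))
        · by_cases h2 : (v : ℕ) + d = (u : ℕ)
          · exact (stepA (g u) ⟨(v : ℕ), by omega⟩
                (by simp only [Fin.val_mk]; omega) (by simp only [Fin.val_mk]; omega)).trans
              (stepB ⟨(v : ℕ), by omega⟩ (g v)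
                (by simp only [Fin.val_mk]; omega) (by simp only [Fin.val_mk]; omega))
          · exact ((stepA (g u) ⟨(v : ℕ), by omega⟩
                (by simp only [Fin.val_mk]; omega) (by simp only [Fin.val_mk]; omega)).trans
              (stepB ⟨(v : ℕ), by omega⟩ ⟨(u : ℕ), by omega⟩
                (by simp only [Fin.val_mk]; omega)
                (by simp only [Fin.val_mk]; omega))).trans
              (stepA ⟨(u : ℕ), by omega⟩ (g v)
                (by simp only [Fin.val_mk]; omega) (by simp only [Fin.val_mk]; omega))
      · have e1 : g u = U := Fin.ext (by omega)
        have e2 : g v = V := Fin.ext (by omega)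
        have hadj : (Meander a b).Adj (g u) (g v) := by rw [e1, e2]; exact Or.inl hE
        exact hadj.reachable
    · rcases RC.up b b' hxb hb'c hnn u v hB with ⟨hu, hv, hsum, hne⟩ | ⟨U, V, hU, hV, hE⟩
      · exact stepA (g u) (g v) (by omega) (by omega)
      · have e1 : g u = U := Fin.ext (by omega)
        have e2 : g v = V := Fin.ext (by omega)
        have hadj : (Meander a b).Adj (g u) (g v) := by rw [e1, e2]; exact Or.inr hE
        exact hadj.reachable
  -- bottom first-block edges of M with mixed endpoints
  have Bmixed : ∀ u v : Fin n, (u : ℕ) < d → d ≤ (v : ℕ) →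
      ((u : ℕ) + 1) + ((v : ℕ) + 1) = b₁ + 1 →
      (Meander a' b').Reachable (f u) (f v) := by
    intro u v h1 h2 hsum
    have hfu := hfval_lt u h1
    have hfv := hfval_ge v h2
    have hvn : (v : ℕ) < n := v.isLt
    by_cases hq : 2 * ((v : ℕ) + 1) = b₁ + 1 + d
    · exact stepA' (f u) (f v) (by omega) (by omega)
    · exact (stepA' (f u) ⟨(u : ℕ), by omega⟩
          (by simp only [Fin.val_mk]; omega) (by simp only [Fin.val_mk]; omega)).trans
        (stepB' ⟨(u : ℕ), by omega⟩ (f v)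
          (by simp only [Fin.val_mk]; omega) (by simp only [Fin.val_mk]; omega))
  -- bottom first-block edges of M with both endpoints ≥ d
  have Bcore : ∀ u v : Fin n, d ≤ (u : ℕ) → (u : ℕ) < (v : ℕ) →
      ((u : ℕ) + 1) + ((v : ℕ) + 1) = b₁ + 1 →
      (Meander a' b').Reachable (f u) (f v) := by
    intro u v h1 h2 hsum
    have hd2 : d ≤ (v : ℕ) := by omega
    have hfu := hfval_ge u h1
    have hfv := hfval_ge v hd2
    have hvn : (v : ℕ) < n := v.isLt
    have hstep12 : (Meander a' b').Reachable (f u) ⟨(u : ℕ), by omega⟩ :=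
      (stepB' (f u) ⟨c + d - 1 - (u : ℕ), by omega⟩
          (by simp only [Fin.val_mk]; omega) (by simp only [Fin.val_mk]; omega)).trans
        (stepA' ⟨c + d - 1 - (u : ℕ), by omega⟩ ⟨(u : ℕ), by omega⟩
          (by simp only [Fin.val_mk]; omega) (by simp only [Fin.val_mk]; omega))
    by_cases hlast : (u : ℕ) + d = (v : ℕ)
    · have heq : (⟨(u : ℕ), by omega⟩ : Fin (n - (a₁ - b₁))) = f v :=
        Fin.ext (by simp only [Fin.val_mk]; omega)
      rw [heq] at hstep12
      exact hstep12
    · exact hstep12.trans (stepB' ⟨(u : ℕ), by omega⟩ (f v)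
        (by simp only [Fin.val_mk]; omega) (by simp only [Fin.val_mk]; omega))
  -- edges of M map to walks in M' under f
  have LF : ∀ u v : Fin n, (Meander a b).Adj u v →
      (Meander a' b').Reachable (f u) (f v) := by
    intro u v h
    have hun : (u : ℕ) < n := u.isLt
    have hvn : (v : ℕ) < n := v.isLt
    rcases h with hA | hB
    · rcases RC.down a a' hxa ha' hnn u v hA with ⟨hu, hv, hsum, hne⟩ |
        ⟨U, V, hU, hV, hyu, hyv, hE⟩
      · by_cases h1 : (u : ℕ) < d
        · by_cases h2 : (v : ℕ) < d
          · exfalso; omega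
          · have hfu := hfval_lt u h1
            have hfv := hfval_ge v (by omega)
            have heq : f u = f v := Fin.ext (by omega)
            rw [heq]
        · have hfu := hfval_ge u (by omega)
          by_cases h2 : (v : ℕ) < d
          · have hfv := hfval_lt v h2
            have heq : f u = f v := Fin.ext (by omega)
            rw [heq]
          · have hfv := hfval_ge v (by omega)
            exact stepB' (f u) (f v) (by omega) (by omega)
      · have hfu := hfval_ge u (by omega)
        have hfv := hfval_ge v (by omega)
        have e1 : f u = U := Fin.ext (by omega)
        have e2 : f v = V := Fin.ext (by omega)
        have hadj : (Meander a' b').Adj (f u) (f v) := by rw [e1, e2]; exact Or.inl hE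
        exact hadj.reachable
    · rcases RC.down b b' hxb hb'c hnn u v hB with ⟨hu, hv, hsum, hne⟩ |
        ⟨U, V, hU, hV, hyu, hyv, hE⟩
      · by_cases h1 : (u : ℕ) < d
        · by_cases h2 : (v : ℕ) < d
          · have hfu := hfval_lt u h1
            have hfv := hfval_lt v h2
            exact stepA' (f u) (f v) (by omega) (by omega)
          · exact Bmixed u v h1 (by omega) (by omega)
        · by_cases h2 : (v : ℕ) < d
          · exact (Bmixed v u h2 (by omega) (by omega)).symm
          · rcases Nat.lt_or_ge (u : ℕ) (v : ℕ) with hlt | hge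
            · exact Bcore u v (by omega) hlt (by omega)
            · exact (Bcore v u (by omega) (by omega) (by omega)).symm
      · have hfu := hfval_ge u (by omega)
        have hfv := hfval_ge v (by omega)
        have e1 : f u = U := Fin.ext (by omega)
        have e2 : f v = V := Fin.ext (by omega)
        have hadj : (Meander a' b').Adj (f u) (f v) := by rw [e1, e2]; exact Or.inr hE
        exact hadj.reachable
  have LGF : ∀ w : Fin n, (Meander a b).Reachable (g (f w)) w := by
    intro w
    have hwn : (w : ℕ) < n := w.isLt
    have hgw := hgval (f w)
    by_cases hw : (w : ℕ) < d
    · have hfw := hfval_lt w hw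
      exact stepA (g (f w)) w (by omega) (by omega)
    · have hfw := hfval_ge w (by omega)
      have heq : g (f w) = w := Fin.ext (by omega)
      rw [heq]
  have LFG : ∀ u : Fin (n - (a₁ - b₁)), f (g u) = u := by
    intro u
    have hun : (u : ℕ) < n - (a₁ - b₁) := u.isLt
    have hgu := hgval u
    have h : d ≤ ((g u : ℕ)) := by omega
    have hfgu := hfval_ge (g u) h
    exact Fin.ext (by omega)
  -- induced maps on connected components
  have reachF : ∀ v w : Fin n, (Meander a b).Reachable v w →
      (Meander a' b').Reachable (f v) (f w) := by
    intro v w h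
    obtain ⟨p⟩ := h
    induction p with
    | nil => exact SimpleGraph.Reachable.refl _
    | cons h q ih => exact (LF _ _ h).trans ih
  have reachG : ∀ v w : Fin (n - (a₁ - b₁)), (Meander a' b').Reachable v w →
      (Meander a b).Reachable (g v) (g w) := by
    intro v w h
    obtain ⟨p⟩ := h
    induction p with
    | nil => exact SimpleGraph.Reachable.refl _
    | cons h q ih => exact (LG _ _ h).trans ih
  obtain ⟨Φ, hΦ⟩ : ∃ Φ : (Meander a b).ConnectedComponent → (Meander a' b').ConnectedComponent,
      ∀ v, Φ ((Meander a b).connectedComponentMk v) =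
        (Meander a' b').connectedComponentMk (f v) :=
    ⟨SimpleGraph.ConnectedComponent.lift
      (fun v => (Meander a' b').connectedComponentMk (f v))
      (fun v w p _ => SimpleGraph.ConnectedComponent.sound (reachF v w ⟨p⟩)), fun v => rfl⟩
  obtain ⟨Ψ, hΨ⟩ : ∃ Ψ : (Meander a' b').ConnectedComponent → (Meander a b).ConnectedComponent,
      ∀ v, Ψ ((Meander a' b').connectedComponentMk v) =
        (Meander a b).connectedComponentMk (g v) :=
    ⟨SimpleGraph.ConnectedComponent.lift
      (fun v => (Meander a b).connectedComponentMk (g v))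
      (fun v w p _ => SimpleGraph.ConnectedComponent.sound (reachG v w ⟨p⟩)), fun v => rfl⟩
  have hΨΦ : ∀ C, Ψ (Φ C) = C := by
    refine SimpleGraph.ConnectedComponent.ind ?_
    intro v
    rw [hΦ, hΨ]
    exact SimpleGraph.ConnectedComponent.sound (LGF v)
  have hΦΨ : ∀ C, Φ (Ψ C) = C := by
    refine SimpleGraph.ConnectedComponent.ind ?_
    intro u
    rw [hΨ, hΦ, LFG u]
  -- transfer of the cycle condition
  have h1dir : ∀ C, ¬ IsCycleComp a b C → ¬ IsCycleComp a' b' (Φ C) := by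
    intro C hC
    have hC' : ∃ v, (Meander a b).connectedComponentMk v = C ∧
        ¬((∃ w, CompEdge a v w) ∧ (∃ w, CompEdge b v w)) := by
      by_contra hcon
      apply hC
      intro v hv
      by_contra hvbad
      exact hcon ⟨v, hv, hvbad⟩
    obtain ⟨v, hmk, hbad⟩ := hC'
    have hvn : (v : ℕ) < n := v.isLt
    intro hIs
    by_cases hnt : ∃ w, CompEdge a v w
    · -- v has a top edge, hence no bottom edge
      have hnb : ¬ ∃ w, CompEdge b v w := fun hex => hbad ⟨hnt, hex⟩
      by_cases hvb : (v : ℕ) + 1 ≤ b₁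
      · have hmid := RC.first_mid b hb v hvb hnb
        have hv'lt : (v : ℕ) < n - (a₁ - b₁) := by omega
        have hnt' : ¬ ∃ w, CompEdge a' (⟨(v : ℕ), hv'lt⟩ : Fin (n - (a₁ - b₁))) w :=
          RC.no_partner_first a' ha' _ (by simp only [Fin.val_mk]; omega)
            (by simp only [Fin.val_mk]; omega)
        have hreach : (Meander a' b').Reachable (⟨(v : ℕ), hv'lt⟩ : Fin (n - (a₁ - b₁)))
            (f v) := by
          by_cases hvd : (v : ℕ) < d
          · have hfv := hfval_lt v hvd
            have heq : (⟨(v : ℕ), hv'lt⟩ : Fin (n - (a₁ - b₁))) = f v :=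
              Fin.ext (by simp only [Fin.val_mk]; omega)
            rw [heq]
          · have hwn : (v : ℕ) + d < n := by omega
            have hedge : (Meander a b).Adj v ⟨(v : ℕ) + d, hwn⟩ :=
              mkA v _ (by simp only [Fin.val_mk]; omega) (by simp only [Fin.val_mk]; omega)
            have hr := LF v _ hedge
            have hfw := hfval_ge (⟨(v : ℕ) + d, hwn⟩ : Fin n) (by simp only [Fin.val_mk]; omega)
            have he : f (⟨(v : ℕ) + d, hwn⟩ : Fin n) = ⟨(v : ℕ), hv'lt⟩ :=
              Fin.ext (by simp only [Fin.val_mk] at *; omega)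
            rw [he] at hr
            exact hr.symm
        have hmk' : (Meander a' b').connectedComponentMk ⟨(v : ℕ), hv'lt⟩ = Φ C := by
          rw [← hmk, hΦ v]
          exact SimpleGraph.ConnectedComponent.sound hreach
        exact hnt' (hIs _ hmk').1
      · have hvd : d ≤ (v : ℕ) := by omega
        have hfv := hfval_ge v hvd
        have hnb' : ¬ ∃ w, CompEdge b' (f v) w :=
          RC.no_partner_down b b' hxb hb'c v (f v) (by omega) (by omega) hnb
        exact hnb' (hIs _ (by rw [← hmk, hΦ v])).2
    · by_cases hva : (v : ℕ) + 1 ≤ a₁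
      · have hmid := RC.first_mid a ha v hva hnt
        have hvd : d ≤ (v : ℕ) := by omega
        have hfv := hfval_ge v hvd
        have hnb' : ¬ ∃ w, CompEdge b' (f v) w :=
          RC.no_partner_first b' hb'c (f v) (by omega) (by omega)
        exact hnb' (hIs _ (by rw [← hmk, hΦ v])).2
      · have hvd : d ≤ (v : ℕ) := by omega
        have hfv := hfval_ge v hvd
        have hnt' : ¬ ∃ w, CompEdge a' (f v) w :=
          RC.no_partner_down a a' hxa ha' v (f v) (by omega) (by omega) hnt
        exact hnt' (hIs _ (by rw [← hmk, hΦ v])).1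
  have h2dir : ∀ C, ¬ IsCycleComp a' b' (Φ C) → ¬ IsCycleComp a b C := by
    intro C hC
    have hC' : ∃ v', (Meander a' b').connectedComponentMk v' = Φ C ∧
        ¬((∃ w, CompEdge a' v' w) ∧ (∃ w, CompEdge b' v' w)) := by
      by_contra hcon
      apply hC
      intro v hv
      by_contra hvbad
      exact hcon ⟨v, hv, hvbad⟩
    obtain ⟨v', hmk, hbad⟩ := hC'
    have hvn : (v' : ℕ) < n - (a₁ - b₁) := v'.isLt
    have hgv := hgval v'
    have hCeq : C = (Meander a b).connectedComponentMk (g v') := by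
      calc C = Ψ (Φ C) := (hΨΦ C).symm
        _ = Ψ ((Meander a' b').connectedComponentMk v') := by rw [hmk]
        _ = (Meander a b).connectedComponentMk (g v') := hΨ v'
    intro hIs
    by_cases hnt : ∃ w, CompEdge a' v' w
    · have hnb : ¬ ∃ w, CompEdge b' v' w := fun hex => hbad ⟨hnt, hex⟩
      by_cases hvc : (v' : ℕ) + 1 ≤ c
      · have hmid := RC.first_mid b' hb'c v' hvc hnb
        have hnt2 : ¬ ∃ w, CompEdge a (g v') w :=
          RC.no_partner_first a ha (g v') (by omega) (by omega)
        exact hnt2 (hIs _ (by rw [hCeq])).1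
      · have hnb2 : ¬ ∃ w, CompEdge b (g v') w :=
          RC.no_partner_up b b' hxb hb'c (g v') v' (by omega) (by omega) hnb
        exact hnb2 (hIs _ (by rw [hCeq])).2
    · by_cases hvb : (v' : ℕ) + 1 ≤ b₁
      · have hmid := RC.first_mid a' ha' v' hvb hnt
        have hv2 : (v' : ℕ) < n := by omega
        have hnb2 : ¬ ∃ w, CompEdge b (⟨(v' : ℕ), hv2⟩ : Fin n) w :=
          RC.no_partner_first b hb _ (by simp only [Fin.val_mk]; omega)
            (by simp only [Fin.val_mk]; omega)
        have hreach : (Meander a b).Reachable (⟨(v' : ℕ), hv2⟩ : Fin n) (g v') :=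
          stepA _ _ (by simp only [Fin.val_mk]; omega) (by simp only [Fin.val_mk]; omega)
        have hmkv : (Meander a b).connectedComponentMk ⟨(v' : ℕ), hv2⟩ = C := by
          rw [hCeq]
          exact SimpleGraph.ConnectedComponent.sound hreach
        exact hnb2 (hIs _ hmkv).2
      · have hnt2 : ¬ ∃ w, CompEdge a (g v') w :=
          RC.no_partner_up a a' hxa ha' (g v') v' (by omega) (by omega) hnt
        exact hnt2 (hIs _ (by rw [hCeq])).1
  -- conclusion
  have hcycle : cycleCount a b = cycleCount a' b' :=
    Nat.card_congr (Equiv.subtypeEquiv ⟨Φ, Ψ, hΨΦ, hΦΨ⟩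
      (fun C => not_iff_not.mp ⟨h1dir C, h2dir C⟩))
  have hpath : pathCount a b = pathCount a' b' :=
    Nat.card_congr (Equiv.subtypeEquiv ⟨Φ, Ψ, hΨΦ, hΦΨ⟩
      (fun C => not_congr (not_iff_not.mp ⟨h1dir C, h2dir C⟩)))
  refine ⟨hcycle, hpath, ?_⟩
  simp only [seaweedInd, hcycle, hpath]
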